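/- Let y_F be the linear chain with nearest-neighbor spacing Fε, let f ∈ 𝒰, and let u^a ∈ 𝒰 satisfy δE^a(y_F)[v] + δ²E^a(y_F)[u^a, v] = ⟨f, v⟩ for all v ∈ 𝒰. Then for every v ∈ 𝒰, | δE^QNL(y_F)[v] + δ²E^QNL(y_F)[u^a, v] − ⟨f, v⟩ | ≤ ε max{ |φ''(2F)|, |φ'(2F)/(2F)| } · [ ( ε‖(u^a)''_1‖² + ε‖(u^a)''_{K+2}‖² )^{1/2} + ε ( ε Σ_{ℓ=K+2}^N ‖(u^a)'''_{ℓ+1}‖² )^{1/2} ] · ‖v'‖_{ℓ²_ε}. -/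

import Mathlib

noncomputable section

open Real Finset

/-- Euclidean norm on `ℝ × ℝ`. -/
def enorm2 (v : ℝ × ℝ) : ℝ := Real.sqrt (v.1 ^ 2 + v.2 ^ 2)

/-- Euclidean dot product on `ℝ × ℝ`. -/
def edot (v w : ℝ × ℝ) : ℝ := v.1 * w.1 + v.2 * w.2

/-- `N`-periodic mean-zero displacements (the space `𝒰`). -/
def IsDisp (N : ℕ) (u : ℤ → ℝ × ℝ) : Prop :=
  (∀ ℓ : ℤ, u (ℓ + (N : ℤ)) = u ℓ) ∧ ∑ ℓ ∈ Finset.Icc (1 : ℤ) (N : ℤ), u ℓ = 0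

/-- Constrained displacements (the space `𝒰̃`): second component vanishes. -/
def IsDisp1D (N : ℕ) (u : ℤ → ℝ × ℝ) : Prop :=
  IsDisp N u ∧ ∀ ℓ : ℤ, (u ℓ).2 = 0

/-- Backward difference `u'_ℓ = (u_ℓ - u_{ℓ-1})/ε`. -/
def bd (ε : ℝ) (u : ℤ → ℝ × ℝ) (ℓ : ℤ) : ℝ × ℝ := ε⁻¹ • (u ℓ - u (ℓ - 1))

/-- The inner product `⟨v,w⟩ = ε ∑_{ℓ=1}^N v_ℓ · w_ℓ`. -/
def ip (N : ℕ) (ε : ℝ) (v w : ℤ → ℝ × ℝ) : ℝ :=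
  ε * ∑ ℓ ∈ Finset.Icc (1 : ℤ) (N : ℤ), edot (v ℓ) (w ℓ)

/-- The norm `‖v‖_{ℓ²_ε}`. -/
def nrm (N : ℕ) (ε : ℝ) (v : ℤ → ℝ × ℝ) : ℝ :=
  Real.sqrt (ε * ∑ ℓ ∈ Finset.Icc (1 : ℤ) (N : ℤ), (enorm2 (v ℓ)) ^ 2)

/-- The atomistic energy `E^a`. -/
def Ea (N : ℕ) (ε : ℝ) (φ : ℝ → ℝ) (y : ℤ → ℝ × ℝ) : ℝ :=
  ε * ∑ ℓ ∈ Finset.Icc (1 : ℤ) (N : ℤ),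
    (φ (enorm2 (bd ε y ℓ)) + φ (enorm2 (bd ε y (ℓ + 1) + bd ε y ℓ)))

/-- The Cauchy–Born energy `E^CB`. -/
def ECB (N : ℕ) (ε : ℝ) (φ : ℝ → ℝ) (y : ℤ → ℝ × ℝ) : ℝ :=
  ε * ∑ ℓ ∈ Finset.Icc (1 : ℤ) (N : ℤ),
    (φ (enorm2 (bd ε y ℓ)) + φ (2 * enorm2 (bd ε y ℓ)))

/-- The bond-angle energy `E^b`. -/
def Eb (N : ℕ) (ε α : ℝ) (y : ℤ → ℝ × ℝ) : ℝ :=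
  ε * ∑ ℓ ∈ Finset.Icc (1 : ℤ) (N : ℤ),
    α * (1 - edot (bd ε y (ℓ + 1)) (bd ε y ℓ) /
      (enorm2 (bd ε y (ℓ + 1)) * enorm2 (bd ε y ℓ)))

/-- The quasi-nonlocal energy `E^QNL`. -/
def EQNL (N K : ℕ) (ε : ℝ) (φ : ℝ → ℝ) (y : ℤ → ℝ × ℝ) : ℝ :=
  ε * ∑ ℓ ∈ Finset.Icc (1 : ℤ) (N : ℤ), φ (enorm2 (bd ε y ℓ))
  + ε * ∑ ℓ ∈ Finset.Icc (1 : ℤ) (K : ℤ), φ (enorm2 (bd ε y (ℓ + 1) + bd ε y ℓ))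
  + ε * ∑ ℓ ∈ Finset.Icc ((K : ℤ) + 2) (N : ℤ), φ (2 * enorm2 (bd ε y ℓ))
  + ε / 2 * φ (2 * enorm2 (bd ε y 1)) + ε / 2 * φ (2 * enorm2 (bd ε y ((K : ℤ) + 1)))

/-- First variation `δE(y)[u] = (d/dt) E(y + t u) |_{t=0}`. -/
def dE (E : (ℤ → ℝ × ℝ) → ℝ) (y u : ℤ → ℝ × ℝ) : ℝ :=
  deriv (fun t : ℝ => E (fun ℓ => y ℓ + t • u ℓ)) 0

/-- Second variation `δ²E(y)[u,v] = (∂²/∂t∂s) E(y + t u + s v) |_{t=s=0}`. -/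
def d2E (E : (ℤ → ℝ × ℝ) → ℝ) (y u v : ℤ → ℝ × ℝ) : ℝ :=
  deriv (fun s : ℝ => deriv (fun t : ℝ => E (fun ℓ => y ℓ + t • u ℓ + s • v ℓ)) 0) 0

/-- The linear chain `y_{F,ℓ} = (Fεℓ, 0)`. -/
def yLin (ε F : ℝ) : ℤ → ℝ × ℝ := fun ℓ => (F * ε * ℓ, 0)

/-- The uniform circular chain of radius `R = Fε/(2 sin(πε))`. -/
def yCirc (ε F : ℝ) : ℤ → ℝ × ℝ := fun ℓ =>
  (F * ε / (2 * Real.sin (π * ε)) * Real.cos (2 * π * ε * ℓ),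
   F * ε / (2 * Real.sin (π * ε)) * Real.sin (2 * π * ε * ℓ))


/-- Explicit formula for the `t`-derivative of a bond term. -/
def Gb (φ : ℝ → ℝ) (c : ℝ) (p q : ℝ × ℝ) (s : ℝ) : ℝ :=
  deriv φ (Real.sqrt ((c + s * q.1) ^ 2 + (s * q.2) ^ 2)) *
    (((c + s * q.1) * p.1 + (s * q.2) * p.2) / Real.sqrt ((c + s * q.1) ^ 2 + (s * q.2) ^ 2))

lemma hasDerivAt_phi {φ : ℝ → ℝ} (hφ : ContDiffOn ℝ 2 φ (Set.Ioi 0)) {x : ℝ} (hx : 0 < x) :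
    HasDerivAt φ (deriv φ x) x :=
  ((hφ.contDiffAt (isOpen_Ioi.mem_nhds hx)).differentiableAt (by norm_num)).hasDerivAt

lemma hasDerivAt_dphi {φ : ℝ → ℝ} (hφ : ContDiffOn ℝ 2 φ (Set.Ioi 0)) {x : ℝ} (hx : 0 < x) :
    HasDerivAt (deriv φ) (deriv (deriv φ) x) x := by
  have h1 : ContDiffOn ℝ 1 (deriv φ) (Set.Ioi 0) :=
    hφ.deriv_of_isOpen isOpen_Ioi (by norm_num)
  exact ((h1.contDiffAt (isOpen_Ioi.mem_nhds hx)).differentiableAt (by norm_num)).hasDerivAt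

lemma bond1 {φ : ℝ → ℝ} (hφ : ContDiffOn ℝ 2 φ (Set.Ioi 0)) (c : ℝ) (p q : ℝ × ℝ) (s : ℝ)
    (hR : 0 < (c + s * q.1) ^ 2 + (s * q.2) ^ 2) :
    HasDerivAt (fun t : ℝ => φ (enorm2 ((c, 0) + t • p + s • q))) (Gb φ c p q s) 0 := by
  have hn : HasDerivAt (fun t : ℝ => ((c + s * q.1) + t * p.1) ^ 2 + ((s * q.2) + t * p.2) ^ 2)
      (2 * ((c + s * q.1) * p.1 + (s * q.2) * p.2)) 0 := by
    have h1 : HasDerivAt (fun t : ℝ => (c + s * q.1) + t * p.1) p.1 0 := by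
      simpa using ((hasDerivAt_id (0:ℝ)).mul_const p.1).const_add (c + s * q.1)
    have h2 : HasDerivAt (fun t : ℝ => (s * q.2) + t * p.2) p.2 0 := by
      simpa using ((hasDerivAt_id (0:ℝ)).mul_const p.2).const_add (s * q.2)
    have := (h1.fun_pow 2).fun_add (h2.fun_pow 2)
    refine this.congr_deriv ?_
    norm_num; ring
  have hf0 : ((c + s * q.1) + 0 * p.1) ^ 2 + ((s * q.2) + 0 * p.2) ^ 2
      = (c + s * q.1) ^ 2 + (s * q.2) ^ 2 := by ring
  have hsq := hn.sqrt (by rw [hf0]; exact hR.ne')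
  rw [hf0] at hsq
  have hRpos : 0 < Real.sqrt ((c + s * q.1) ^ 2 + (s * q.2) ^ 2) := Real.sqrt_pos.mpr hR
  have hφ' : HasDerivAt φ
      (deriv φ (Real.sqrt ((c + s * q.1) ^ 2 + (s * q.2) ^ 2)))
      (Real.sqrt (((c + s * q.1) + 0 * p.1) ^ 2 + ((s * q.2) + 0 * p.2) ^ 2)) := by
    rw [hf0]; exact hasDerivAt_phi hφ hRpos
  have hcomp := hφ'.comp 0 hsq
  have hfun : (fun t : ℝ => φ (enorm2 ((c, 0) + t • p + s • q)))
      = φ ∘ (fun t : ℝ => Real.sqrt (((c + s * q.1) + t * p.1) ^ 2 + ((s * q.2) + t * p.2) ^ 2)) := by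
    funext t
    simp only [Function.comp, enorm2, Prod.fst_add, Prod.snd_add, Prod.smul_fst, Prod.smul_snd,
      smul_eq_mul, Prod.mk.injEq]
    norm_num
    ring_nf
  rw [hfun]
  refine hcomp.congr_deriv ?_
  simp only [Gb]
  field_simp

lemma bond2 {φ : ℝ → ℝ} (hφ : ContDiffOn ℝ 2 φ (Set.Ioi 0)) {c : ℝ} (hc : 0 < c) (p q : ℝ × ℝ) :
    HasDerivAt (Gb φ c p q)
      (deriv (deriv φ) c * (p.1 * q.1) + deriv φ c / c * (p.2 * q.2)) 0 := by
  have hm : HasDerivAt (fun s : ℝ => (c + s * q.1) ^ 2 + (s * q.2) ^ 2) (2 * c * q.1) 0 := by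
    have h1 : HasDerivAt (fun s : ℝ => c + s * q.1) q.1 0 := by
      simpa using ((hasDerivAt_id (0:ℝ)).mul_const q.1).const_add c
    have h2 : HasDerivAt (fun s : ℝ => s * q.2) q.2 0 := by
      simpa using (hasDerivAt_id (0:ℝ)).mul_const q.2
    have := (h1.fun_pow 2).fun_add (h2.fun_pow 2)
    refine this.congr_deriv ?_
    norm_num
  have hm0 : (c + 0 * q.1) ^ 2 + (0 * q.2) ^ 2 = c ^ 2 := by ring
  have hc2 : (0:ℝ) < c ^ 2 := by positivity
  have hR : HasDerivAt (fun s : ℝ => Real.sqrt ((c + s * q.1) ^ 2 + (s * q.2) ^ 2))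
      (2 * c * q.1 / (2 * c)) 0 := by
    have := hm.sqrt (by rw [hm0]; exact hc2.ne')
    rw [hm0, Real.sqrt_sq hc.le] at this
    exact this
  have hR0 : Real.sqrt ((c + 0 * q.1) ^ 2 + (0 * q.2) ^ 2) = c := by
    rw [hm0, Real.sqrt_sq hc.le]
  have hφ1 : HasDerivAt (fun s : ℝ => deriv φ (Real.sqrt ((c + s * q.1) ^ 2 + (s * q.2) ^ 2)))
      (deriv (deriv φ) c * (2 * c * q.1 / (2 * c))) 0 := by
    have hout : HasDerivAt (deriv φ) (deriv (deriv φ) c)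
        (Real.sqrt ((c + 0 * q.1) ^ 2 + (0 * q.2) ^ 2)) := by
      rw [hR0]; exact hasDerivAt_dphi hφ hc
    exact hout.comp 0 hR
  have hnum : HasDerivAt (fun s : ℝ => (c + s * q.1) * p.1 + (s * q.2) * p.2)
      (q.1 * p.1 + q.2 * p.2) 0 := by
    have h1 : HasDerivAt (fun s : ℝ => (c + s * q.1) * p.1) (q.1 * p.1) 0 := by
      have : HasDerivAt (fun s : ℝ => c + s * q.1) q.1 0 := by
        simpa using ((hasDerivAt_id (0:ℝ)).mul_const q.1).const_add c
      simpa using this.mul_const p.1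
    have h2 : HasDerivAt (fun s : ℝ => (s * q.2) * p.2) (q.2 * p.2) 0 := by
      simpa [mul_assoc] using (hasDerivAt_id (0:ℝ)).mul_const (q.2 * p.2)
    exact h1.add h2
  have hdiv := hnum.fun_div hR (by rw [hR0]; exact hc.ne')
  have := hφ1.fun_mul hdiv
  refine this.congr_deriv ?_
  rw [hR0]
  norm_num
  field_simp
  ring
/-- Second-variation coefficient form. -/
def Q2 (φ : ℝ → ℝ) (c : ℝ) (p q : ℝ × ℝ) : ℝ :=
  deriv (deriv φ) c * (p.1 * q.1) + deriv φ c / c * (p.2 * q.2)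

lemma Gb_zero {φ : ℝ → ℝ} {c : ℝ} (hc : 0 < c) (p q : ℝ × ℝ) :
    Gb φ c p q 0 = deriv φ c * p.1 := by
  have h0 : (c + 0 * q.1) ^ 2 + (0 * q.2) ^ 2 = c ^ 2 := by ring
  rw [Gb, h0, Real.sqrt_sq hc.le]
  field_simp
  ring

lemma ev_pos {c : ℝ} (hc : 0 < c) (q : ℝ × ℝ) :
    ∀ᶠ s in nhds (0:ℝ), 0 < (c + s * q.1) ^ 2 + (s * q.2) ^ 2 := by
  have hcont : ContinuousAt (fun s : ℝ => (c + s * q.1) ^ 2 + (s * q.2) ^ 2) 0 := by fun_prop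
  have h0 : (0:ℝ) < (c + 0 * q.1) ^ 2 + (0 * q.2) ^ 2 := by
    have : (c + 0 * q.1) ^ 2 + (0 * q.2) ^ 2 = c ^ 2 := by ring
    rw [this]; positivity
  exact hcont.eventually (eventually_gt_nhds h0)

lemma pos_zero {c : ℝ} (hc : 0 < c) (q : ℝ × ℝ) :
    0 < (c + 0 * q.1) ^ 2 + (0 * q.2) ^ 2 := by
  have : (c + 0 * q.1) ^ 2 + (0 * q.2) ^ 2 = c ^ 2 := by ring
  rw [this]; positivity

lemma bd_comb {ε : ℝ} (hε : ε ≠ 0) (F : ℝ) (u v : ℤ → ℝ × ℝ) (t s : ℝ) (ℓ : ℤ) :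
    bd ε (fun m => yLin ε F m + t • u m + s • v m) ℓ
      = (F, 0) + t • bd ε u ℓ + s • bd ε v ℓ := by
  simp only [bd, yLin, Prod.ext_iff, Prod.fst_add, Prod.snd_add, Prod.smul_fst, Prod.smul_snd,
    Prod.fst_sub, Prod.snd_sub, smul_eq_mul]
  constructor
  · push_cast
    field_simp
    ring
  · field_simp
    ring

lemma add_bonds (F t s : ℝ) (a a' b b' : ℝ × ℝ) :
    ((F, (0:ℝ)) + t • a + s • b) + ((F, (0:ℝ)) + t • a' + s • b')
      = (2 * F, (0:ℝ)) + t • (a + a') + s • (b + b') := by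
  simp only [Prod.ext_iff, Prod.fst_add, Prod.snd_add, Prod.smul_fst, Prod.smul_snd, smul_eq_mul]
  constructor <;> ring

lemma Ea_eq {N : ℕ} {ε : ℝ} (hε : ε ≠ 0) (φ : ℝ → ℝ) (F : ℝ) (u v : ℤ → ℝ × ℝ) (t s : ℝ) :
    Ea N ε φ (fun ℓ => yLin ε F ℓ + t • u ℓ + s • v ℓ)
      = ε * ∑ ℓ ∈ Finset.Icc (1 : ℤ) (N : ℤ),
          (φ (enorm2 ((F, 0) + t • bd ε u ℓ + s • bd ε v ℓ))
            + φ (enorm2 ((2 * F, 0) + t • (bd ε u (ℓ+1) + bd ε u ℓ)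
                + s • (bd ε v (ℓ+1) + bd ε v ℓ)))) := by
  unfold Ea
  congr 1
  apply Finset.sum_congr rfl
  intro ℓ _
  rw [bd_comb hε, bd_comb hε, add_bonds]

lemma hasDerivAt_inner_Ea {N : ℕ} {ε : ℝ} (hε : ε ≠ 0) {φ : ℝ → ℝ}
    (hφ : ContDiffOn ℝ 2 φ (Set.Ioi 0)) (F : ℝ) (u v : ℤ → ℝ × ℝ) (s : ℝ)
    (h1 : ∀ ℓ ∈ Finset.Icc (1 : ℤ) (N : ℤ),
      0 < (F + s * (bd ε v ℓ).1) ^ 2 + (s * (bd ε v ℓ).2) ^ 2)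
    (h2 : ∀ ℓ ∈ Finset.Icc (1 : ℤ) (N : ℤ),
      0 < (2 * F + s * (bd ε v (ℓ+1) + bd ε v ℓ).1) ^ 2
          + (s * (bd ε v (ℓ+1) + bd ε v ℓ).2) ^ 2) :
    HasDerivAt (fun t : ℝ => Ea N ε φ (fun ℓ => yLin ε F ℓ + t • u ℓ + s • v ℓ))
      (ε * ∑ ℓ ∈ Finset.Icc (1 : ℤ) (N : ℤ),
        (Gb φ F (bd ε u ℓ) (bd ε v ℓ) s
          + Gb φ (2 * F) (bd ε u (ℓ+1) + bd ε u ℓ) (bd ε v (ℓ+1) + bd ε v ℓ) s)) 0 := by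
  have hfun : (fun t : ℝ => Ea N ε φ (fun ℓ => yLin ε F ℓ + t • u ℓ + s • v ℓ))
      = fun t : ℝ => ε * ∑ ℓ ∈ Finset.Icc (1 : ℤ) (N : ℤ),
          (φ (enorm2 ((F, 0) + t • bd ε u ℓ + s • bd ε v ℓ))
            + φ (enorm2 ((2 * F, 0) + t • (bd ε u (ℓ+1) + bd ε u ℓ)
                + s • (bd ε v (ℓ+1) + bd ε v ℓ)))) := by
    funext t; exact Ea_eq hε φ F u v t s
  rw [hfun]
  exact HasDerivAt.const_mul ε (HasDerivAt.fun_sum (fun ℓ hℓ =>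
    (bond1 hφ F (bd ε u ℓ) (bd ε v ℓ) s (h1 ℓ hℓ)).fun_add
      (bond1 hφ (2 * F) (bd ε u (ℓ+1) + bd ε u ℓ) (bd ε v (ℓ+1) + bd ε v ℓ) s (h2 ℓ hℓ))))

lemma dE_Ea {N : ℕ} {ε : ℝ} (hε : ε ≠ 0) {φ : ℝ → ℝ}
    (hφ : ContDiffOn ℝ 2 φ (Set.Ioi 0)) {F : ℝ} (hF : 0 < F) (v : ℤ → ℝ × ℝ) :
    dE (Ea N ε φ) (yLin ε F) v
      = ε * ∑ ℓ ∈ Finset.Icc (1 : ℤ) (N : ℤ),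
          (deriv φ F * (bd ε v ℓ).1
            + deriv φ (2 * F) * ((bd ε v (ℓ+1)).1 + (bd ε v ℓ).1)) := by
  have h2F : (0:ℝ) < 2 * F := by linarith
  have hrw : (fun t : ℝ => Ea N ε φ (fun ℓ => yLin ε F ℓ + t • v ℓ))
      = fun t : ℝ => Ea N ε φ (fun ℓ => yLin ε F ℓ + t • v ℓ + (0:ℝ) • v ℓ) := by
    funext t; congr 1; funext ℓ; simp
  have hD := hasDerivAt_inner_Ea (N := N) hε hφ F v v 0
    (fun ℓ _ => pos_zero hF _) (fun ℓ _ => pos_zero h2F _)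
  rw [dE, hrw, hD.deriv]
  congr 1
  apply Finset.sum_congr rfl
  intro ℓ _
  rw [Gb_zero hF, Gb_zero h2F]
  simp [Prod.fst_add]

lemma d2E_Ea {N : ℕ} {ε : ℝ} (hε : ε ≠ 0) {φ : ℝ → ℝ}
    (hφ : ContDiffOn ℝ 2 φ (Set.Ioi 0)) {F : ℝ} (hF : 0 < F) (u v : ℤ → ℝ × ℝ) :
    d2E (Ea N ε φ) (yLin ε F) u v
      = ε * ∑ ℓ ∈ Finset.Icc (1 : ℤ) (N : ℤ),
          (Q2 φ F (bd ε u ℓ) (bd ε v ℓ)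
            + Q2 φ (2 * F) (bd ε u (ℓ+1) + bd ε u ℓ) (bd ε v (ℓ+1) + bd ε v ℓ)) := by
  have h2F : (0:ℝ) < 2 * F := by linarith
  have hev : (fun s : ℝ => deriv (fun t : ℝ =>
        Ea N ε φ (fun ℓ => yLin ε F ℓ + t • u ℓ + s • v ℓ)) 0)
      =ᶠ[nhds (0:ℝ)] (fun s : ℝ => ε * ∑ ℓ ∈ Finset.Icc (1 : ℤ) (N : ℤ),
          (Gb φ F (bd ε u ℓ) (bd ε v ℓ) s
            + Gb φ (2 * F) (bd ε u (ℓ+1) + bd ε u ℓ) (bd ε v (ℓ+1) + bd ε v ℓ) s)) := by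
    have e1 : ∀ᶠ s in nhds (0:ℝ), ∀ ℓ ∈ Finset.Icc (1 : ℤ) (N : ℤ),
        0 < (F + s * (bd ε v ℓ).1) ^ 2 + (s * (bd ε v ℓ).2) ^ 2 :=
      (Finset.eventually_all _).mpr (fun ℓ _ => ev_pos hF _)
    have e2 : ∀ᶠ s in nhds (0:ℝ), ∀ ℓ ∈ Finset.Icc (1 : ℤ) (N : ℤ),
        0 < (2 * F + s * (bd ε v (ℓ+1) + bd ε v ℓ).1) ^ 2
            + (s * (bd ε v (ℓ+1) + bd ε v ℓ).2) ^ 2 :=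
      (Finset.eventually_all _).mpr (fun ℓ _ => ev_pos h2F _)
    filter_upwards [e1, e2] with s hs1 hs2
    exact (hasDerivAt_inner_Ea hε hφ F u v s hs1 hs2).deriv
  rw [d2E, hev.deriv_eq]
  have hD : HasDerivAt (fun s : ℝ => ε * ∑ ℓ ∈ Finset.Icc (1 : ℤ) (N : ℤ),
      (Gb φ F (bd ε u ℓ) (bd ε v ℓ) s
        + Gb φ (2 * F) (bd ε u (ℓ+1) + bd ε u ℓ) (bd ε v (ℓ+1) + bd ε v ℓ) s))
      (ε * ∑ ℓ ∈ Finset.Icc (1 : ℤ) (N : ℤ),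
        (Q2 φ F (bd ε u ℓ) (bd ε v ℓ)
          + Q2 φ (2 * F) (bd ε u (ℓ+1) + bd ε u ℓ) (bd ε v (ℓ+1) + bd ε v ℓ))) 0 :=
    HasDerivAt.const_mul ε (HasDerivAt.fun_sum (fun ℓ _ =>
      ((bond2 hφ hF _ _).fun_add (bond2 hφ h2F _ _))))
  exact hD.deriv
lemma two_mul_enorm2 (x : ℝ × ℝ) : enorm2 ((2:ℝ) • x) = 2 * enorm2 x := by
  simp only [enorm2, Prod.smul_fst, Prod.smul_snd, smul_eq_mul]
  rw [show (2*x.1)^2+(2*x.2)^2 = 2^2*(x.1^2+x.2^2) by ring,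
    Real.sqrt_mul (by positivity) _, Real.sqrt_sq (by norm_num)]

lemma comb2 (F t s : ℝ) (p q : ℝ × ℝ) :
    ((2 * F, (0:ℝ)) + t • ((2:ℝ) • p) + s • ((2:ℝ) • q)) = (2:ℝ) • ((F, (0:ℝ)) + t • p + s • q) := by
  simp only [Prod.ext_iff, Prod.fst_add, Prod.snd_add, Prod.smul_fst, Prod.smul_snd, smul_eq_mul]
  constructor <;> ring

lemma phi_two (φ : ℝ → ℝ) (F t s : ℝ) (p q : ℝ × ℝ) :
    φ (2 * enorm2 ((F, 0) + t • p + s • q))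
      = φ (enorm2 ((2 * F, 0) + t • ((2:ℝ) • p) + s • ((2:ℝ) • q))) := by
  rw [comb2, two_mul_enorm2]

lemma EQNL_eq {N K : ℕ} {ε : ℝ} (hε : ε ≠ 0) (φ : ℝ → ℝ) (F : ℝ) (u v : ℤ → ℝ × ℝ) (t s : ℝ) :
    EQNL N K ε φ (fun ℓ => yLin ε F ℓ + t • u ℓ + s • v ℓ)
      = ε * ∑ ℓ ∈ Finset.Icc (1 : ℤ) (N : ℤ),
          φ (enorm2 ((F, 0) + t • bd ε u ℓ + s • bd ε v ℓ))
      + ε * ∑ ℓ ∈ Finset.Icc (1 : ℤ) (K : ℤ),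
          φ (enorm2 ((2 * F, 0) + t • (bd ε u (ℓ+1) + bd ε u ℓ) + s • (bd ε v (ℓ+1) + bd ε v ℓ)))
      + ε * ∑ ℓ ∈ Finset.Icc ((K : ℤ) + 2) (N : ℤ),
          φ (enorm2 ((2 * F, 0) + t • ((2:ℝ) • bd ε u ℓ) + s • ((2:ℝ) • bd ε v ℓ)))
      + ε / 2 * φ (enorm2 ((2 * F, 0) + t • ((2:ℝ) • bd ε u 1) + s • ((2:ℝ) • bd ε v 1)))
      + ε / 2 * φ (enorm2 ((2 * F, 0) + t • ((2:ℝ) • bd ε u ((K : ℤ) + 1))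
          + s • ((2:ℝ) • bd ε v ((K : ℤ) + 1)))) := by
  unfold EQNL
  congr 1
  congr 1
  congr 1
  congr 1
  · congr 1
    apply Finset.sum_congr rfl
    intro ℓ _
    rw [bd_comb hε]
  · congr 1
    apply Finset.sum_congr rfl
    intro ℓ _
    rw [bd_comb hε, bd_comb hε, add_bonds]
  · congr 1
    apply Finset.sum_congr rfl
    intro ℓ _
    rw [bd_comb hε, phi_two φ F t s]
  · rw [bd_comb hε, phi_two φ F t s]
  · rw [bd_comb hε, phi_two φ F t s]

lemma hasDerivAt_inner_EQNL {N K : ℕ} {ε : ℝ} (hε : ε ≠ 0) {φ : ℝ → ℝ}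
    (hφ : ContDiffOn ℝ 2 φ (Set.Ioi 0)) (F : ℝ) (u v : ℤ → ℝ × ℝ) (s : ℝ)
    (h1 : ∀ ℓ ∈ Finset.Icc (1 : ℤ) (N : ℤ),
      0 < (F + s * (bd ε v ℓ).1) ^ 2 + (s * (bd ε v ℓ).2) ^ 2)
    (h2 : ∀ ℓ ∈ Finset.Icc (1 : ℤ) (K : ℤ),
      0 < (2 * F + s * (bd ε v (ℓ+1) + bd ε v ℓ).1) ^ 2
          + (s * (bd ε v (ℓ+1) + bd ε v ℓ).2) ^ 2)
    (h3 : ∀ ℓ ∈ Finset.Icc ((K : ℤ) + 2) (N : ℤ),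
      0 < (2 * F + s * ((2:ℝ) • bd ε v ℓ).1) ^ 2 + (s * ((2:ℝ) • bd ε v ℓ).2) ^ 2)
    (h4 : 0 < (2 * F + s * ((2:ℝ) • bd ε v 1).1) ^ 2 + (s * ((2:ℝ) • bd ε v 1).2) ^ 2)
    (h5 : 0 < (2 * F + s * ((2:ℝ) • bd ε v ((K : ℤ) + 1)).1) ^ 2
        + (s * ((2:ℝ) • bd ε v ((K : ℤ) + 1)).2) ^ 2) :
    HasDerivAt (fun t : ℝ => EQNL N K ε φ (fun ℓ => yLin ε F ℓ + t • u ℓ + s • v ℓ))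
      (ε * ∑ ℓ ∈ Finset.Icc (1 : ℤ) (N : ℤ), Gb φ F (bd ε u ℓ) (bd ε v ℓ) s
        + ε * ∑ ℓ ∈ Finset.Icc (1 : ℤ) (K : ℤ),
            Gb φ (2 * F) (bd ε u (ℓ+1) + bd ε u ℓ) (bd ε v (ℓ+1) + bd ε v ℓ) s
        + ε * ∑ ℓ ∈ Finset.Icc ((K : ℤ) + 2) (N : ℤ),
            Gb φ (2 * F) ((2:ℝ) • bd ε u ℓ) ((2:ℝ) • bd ε v ℓ) s
        + ε / 2 * Gb φ (2 * F) ((2:ℝ) • bd ε u 1) ((2:ℝ) • bd ε v 1) s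
        + ε / 2 * Gb φ (2 * F) ((2:ℝ) • bd ε u ((K : ℤ) + 1)) ((2:ℝ) • bd ε v ((K : ℤ) + 1)) s) 0 := by
  have hfun : (fun t : ℝ => EQNL N K ε φ (fun ℓ => yLin ε F ℓ + t • u ℓ + s • v ℓ))
      = fun t : ℝ =>
        ε * ∑ ℓ ∈ Finset.Icc (1 : ℤ) (N : ℤ),
            φ (enorm2 ((F, 0) + t • bd ε u ℓ + s • bd ε v ℓ))
        + ε * ∑ ℓ ∈ Finset.Icc (1 : ℤ) (K : ℤ),
            φ (enorm2 ((2 * F, 0) + t • (bd ε u (ℓ+1) + bd ε u ℓ) + s • (bd ε v (ℓ+1) + bd ε v ℓ)))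
        + ε * ∑ ℓ ∈ Finset.Icc ((K : ℤ) + 2) (N : ℤ),
            φ (enorm2 ((2 * F, 0) + t • ((2:ℝ) • bd ε u ℓ) + s • ((2:ℝ) • bd ε v ℓ)))
        + ε / 2 * φ (enorm2 ((2 * F, 0) + t • ((2:ℝ) • bd ε u 1) + s • ((2:ℝ) • bd ε v 1)))
        + ε / 2 * φ (enorm2 ((2 * F, 0) + t • ((2:ℝ) • bd ε u ((K : ℤ) + 1))
            + s • ((2:ℝ) • bd ε v ((K : ℤ) + 1)))) := by
    funext t; exact EQNL_eq hε φ F u v t s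
  rw [hfun]
  exact ((((HasDerivAt.const_mul ε (HasDerivAt.fun_sum (fun ℓ hℓ =>
      bond1 hφ F (bd ε u ℓ) (bd ε v ℓ) s (h1 ℓ hℓ)))).add
    (HasDerivAt.const_mul ε (HasDerivAt.fun_sum (fun ℓ hℓ =>
      bond1 hφ (2 * F) _ _ s (h2 ℓ hℓ))))).add
    (HasDerivAt.const_mul ε (HasDerivAt.fun_sum (fun ℓ hℓ =>
      bond1 hφ (2 * F) _ _ s (h3 ℓ hℓ))))).add
    (HasDerivAt.const_mul (ε / 2) (bond1 hφ (2 * F) _ _ s h4))).add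
    (HasDerivAt.const_mul (ε / 2) (bond1 hφ (2 * F) _ _ s h5))

lemma dE_EQNL {N K : ℕ} {ε : ℝ} (hε : ε ≠ 0) {φ : ℝ → ℝ}
    (hφ : ContDiffOn ℝ 2 φ (Set.Ioi 0)) {F : ℝ} (hF : 0 < F) (v : ℤ → ℝ × ℝ) :
    dE (EQNL N K ε φ) (yLin ε F) v
      = ε * ∑ ℓ ∈ Finset.Icc (1 : ℤ) (N : ℤ), deriv φ F * (bd ε v ℓ).1
        + ε * ∑ ℓ ∈ Finset.Icc (1 : ℤ) (K : ℤ),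
            deriv φ (2 * F) * ((bd ε v (ℓ+1)).1 + (bd ε v ℓ).1)
        + ε * ∑ ℓ ∈ Finset.Icc ((K : ℤ) + 2) (N : ℤ), deriv φ (2 * F) * (2 * (bd ε v ℓ).1)
        + ε / 2 * (deriv φ (2 * F) * (2 * (bd ε v 1).1))
        + ε / 2 * (deriv φ (2 * F) * (2 * (bd ε v ((K : ℤ) + 1)).1)) := by
  have h2F : (0:ℝ) < 2 * F := by linarith
  have hrw : (fun t : ℝ => EQNL N K ε φ (fun ℓ => yLin ε F ℓ + t • v ℓ))
      = fun t : ℝ => EQNL N K ε φ (fun ℓ => yLin ε F ℓ + t • v ℓ + (0:ℝ) • v ℓ) := by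
    funext t; congr 1; funext ℓ; simp
  have hD := hasDerivAt_inner_EQNL (N := N) (K := K) hε hφ F v v 0
    (fun ℓ _ => pos_zero hF _) (fun ℓ _ => pos_zero h2F _) (fun ℓ _ => pos_zero h2F _)
    (pos_zero h2F _) (pos_zero h2F _)
  rw [dE, hrw, hD.deriv]
  have g1 : ∑ ℓ ∈ Finset.Icc (1 : ℤ) (N : ℤ), Gb φ F (bd ε v ℓ) (bd ε v ℓ) 0
      = ∑ ℓ ∈ Finset.Icc (1 : ℤ) (N : ℤ), deriv φ F * (bd ε v ℓ).1 :=
    Finset.sum_congr rfl (fun ℓ _ => Gb_zero hF _ _)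
  have g2 : ∑ ℓ ∈ Finset.Icc (1 : ℤ) (K : ℤ),
        Gb φ (2 * F) (bd ε v (ℓ+1) + bd ε v ℓ) (bd ε v (ℓ+1) + bd ε v ℓ) 0
      = ∑ ℓ ∈ Finset.Icc (1 : ℤ) (K : ℤ), deriv φ (2 * F) * ((bd ε v (ℓ+1)).1 + (bd ε v ℓ).1) :=
    Finset.sum_congr rfl (fun ℓ _ => by rw [Gb_zero h2F]; simp [Prod.fst_add])
  have g3 : ∑ ℓ ∈ Finset.Icc ((K : ℤ) + 2) (N : ℤ),
        Gb φ (2 * F) ((2:ℝ) • bd ε v ℓ) ((2:ℝ) • bd ε v ℓ) 0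
      = ∑ ℓ ∈ Finset.Icc ((K : ℤ) + 2) (N : ℤ), deriv φ (2 * F) * (2 * (bd ε v ℓ).1) :=
    Finset.sum_congr rfl (fun ℓ _ => by rw [Gb_zero h2F]; simp [Prod.smul_fst])
  have g4 : Gb φ (2 * F) ((2:ℝ) • bd ε v 1) ((2:ℝ) • bd ε v 1) 0
      = deriv φ (2 * F) * (2 * (bd ε v 1).1) := by rw [Gb_zero h2F]; simp [Prod.smul_fst]
  have g5 : Gb φ (2 * F) ((2:ℝ) • bd ε v ((K : ℤ) + 1)) ((2:ℝ) • bd ε v ((K : ℤ) + 1)) 0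
      = deriv φ (2 * F) * (2 * (bd ε v ((K : ℤ) + 1)).1) := by
    rw [Gb_zero h2F]; simp [Prod.smul_fst]
  rw [g1, g2, g3, g4, g5]

lemma d2E_EQNL {N K : ℕ} {ε : ℝ} (hε : ε ≠ 0) {φ : ℝ → ℝ}
    (hφ : ContDiffOn ℝ 2 φ (Set.Ioi 0)) {F : ℝ} (hF : 0 < F) (u v : ℤ → ℝ × ℝ) :
    d2E (EQNL N K ε φ) (yLin ε F) u v
      = ε * ∑ ℓ ∈ Finset.Icc (1 : ℤ) (N : ℤ), Q2 φ F (bd ε u ℓ) (bd ε v ℓ)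
        + ε * ∑ ℓ ∈ Finset.Icc (1 : ℤ) (K : ℤ),
            Q2 φ (2 * F) (bd ε u (ℓ+1) + bd ε u ℓ) (bd ε v (ℓ+1) + bd ε v ℓ)
        + ε * ∑ ℓ ∈ Finset.Icc ((K : ℤ) + 2) (N : ℤ),
            Q2 φ (2 * F) ((2:ℝ) • bd ε u ℓ) ((2:ℝ) • bd ε v ℓ)
        + ε / 2 * Q2 φ (2 * F) ((2:ℝ) • bd ε u 1) ((2:ℝ) • bd ε v 1)
        + ε / 2 * Q2 φ (2 * F) ((2:ℝ) • bd ε u ((K : ℤ) + 1)) ((2:ℝ) • bd ε v ((K : ℤ) + 1)) := by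
  have h2F : (0:ℝ) < 2 * F := by linarith
  have hev : (fun s : ℝ => deriv (fun t : ℝ =>
        EQNL N K ε φ (fun ℓ => yLin ε F ℓ + t • u ℓ + s • v ℓ)) 0)
      =ᶠ[nhds (0:ℝ)] (fun s : ℝ =>
        ε * ∑ ℓ ∈ Finset.Icc (1 : ℤ) (N : ℤ), Gb φ F (bd ε u ℓ) (bd ε v ℓ) s
        + ε * ∑ ℓ ∈ Finset.Icc (1 : ℤ) (K : ℤ),
            Gb φ (2 * F) (bd ε u (ℓ+1) + bd ε u ℓ) (bd ε v (ℓ+1) + bd ε v ℓ) s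
        + ε * ∑ ℓ ∈ Finset.Icc ((K : ℤ) + 2) (N : ℤ),
            Gb φ (2 * F) ((2:ℝ) • bd ε u ℓ) ((2:ℝ) • bd ε v ℓ) s
        + ε / 2 * Gb φ (2 * F) ((2:ℝ) • bd ε u 1) ((2:ℝ) • bd ε v 1) s
        + ε / 2 * Gb φ (2 * F) ((2:ℝ) • bd ε u ((K : ℤ) + 1)) ((2:ℝ) • bd ε v ((K : ℤ) + 1)) s) := by
    have e1 : ∀ᶠ s in nhds (0:ℝ), ∀ ℓ ∈ Finset.Icc (1 : ℤ) (N : ℤ),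
        0 < (F + s * (bd ε v ℓ).1) ^ 2 + (s * (bd ε v ℓ).2) ^ 2 :=
      (Finset.eventually_all _).mpr (fun ℓ _ => ev_pos hF _)
    have e2 : ∀ᶠ s in nhds (0:ℝ), ∀ ℓ ∈ Finset.Icc (1 : ℤ) (K : ℤ),
        0 < (2 * F + s * (bd ε v (ℓ+1) + bd ε v ℓ).1) ^ 2
            + (s * (bd ε v (ℓ+1) + bd ε v ℓ).2) ^ 2 :=
      (Finset.eventually_all _).mpr (fun ℓ _ => ev_pos h2F _)
    have e3 : ∀ᶠ s in nhds (0:ℝ), ∀ ℓ ∈ Finset.Icc ((K : ℤ) + 2) (N : ℤ),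
        0 < (2 * F + s * ((2:ℝ) • bd ε v ℓ).1) ^ 2 + (s * ((2:ℝ) • bd ε v ℓ).2) ^ 2 :=
      (Finset.eventually_all _).mpr (fun ℓ _ => ev_pos h2F _)
    have e4 := ev_pos h2F ((2:ℝ) • bd ε v 1)
    have e5 := ev_pos h2F ((2:ℝ) • bd ε v ((K : ℤ) + 1))
    filter_upwards [e1, e2, e3, e4, e5] with s hs1 hs2 hs3 hs4 hs5
    exact (hasDerivAt_inner_EQNL hε hφ F u v s hs1 hs2 hs3 hs4 hs5).deriv
  rw [d2E, hev.deriv_eq]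
  exact (((((HasDerivAt.const_mul ε (HasDerivAt.fun_sum (fun ℓ _ => bond2 hφ hF _ _))).add
    (HasDerivAt.const_mul ε (HasDerivAt.fun_sum (fun ℓ _ => bond2 hφ h2F _ _)))).add
    (HasDerivAt.const_mul ε (HasDerivAt.fun_sum (fun ℓ _ => bond2 hφ h2F _ _)))).add
    (HasDerivAt.const_mul (ε / 2) (bond2 hφ h2F _ _))).add
    (HasDerivAt.const_mul (ε / 2) (bond2 hφ h2F _ _))).deriv
lemma sum_Icc_split (g : ℤ → ℝ) {a m b : ℤ} (h1 : a ≤ m + 1) (h2 : m ≤ b) :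
    ∑ ℓ ∈ Finset.Icc a b, g ℓ
      = (∑ ℓ ∈ Finset.Icc a m, g ℓ) + ∑ ℓ ∈ Finset.Icc (m+1) b, g ℓ := by
  have hu : Finset.Icc a b = Finset.Icc a m ∪ Finset.Icc (m+1) b := by
    ext x; simp only [Finset.mem_Icc, Finset.mem_union]; omega
  rw [hu, Finset.sum_union]
  rw [Finset.disjoint_left]
  intro x hx hy
  simp only [Finset.mem_Icc] at hx hy
  omega

lemma sum_shift (g : ℤ → ℝ) (a b : ℤ) :
    ∑ ℓ ∈ Finset.Icc a b, g (ℓ+1) = ∑ ℓ ∈ Finset.Icc (a+1) (b+1), g ℓ := by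
  rw [← Finset.map_add_right_Icc a b 1, Finset.sum_map]
  simp [addRightEmbedding]

lemma bd_periodic {N : ℕ} {ε : ℝ} {u : ℤ → ℝ × ℝ} (hu : ∀ ℓ : ℤ, u (ℓ + (N:ℤ)) = u ℓ) :
    ∀ ℓ : ℤ, bd ε u (ℓ + (N:ℤ)) = bd ε u ℓ := by
  intro ℓ
  have h1 : ℓ + (N:ℤ) - 1 = (ℓ - 1) + (N:ℤ) := by ring
  simp only [bd, hu ℓ, h1, hu (ℓ - 1)]

lemma dE_diff {N K : ℕ} {ε : ℝ} (hε : ε ≠ 0) {φ : ℝ → ℝ}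
    (hφ : ContDiffOn ℝ 2 φ (Set.Ioi 0)) {F : ℝ} (hF : 0 < F)
    (hK1 : 1 ≤ K) (hK2 : K + 2 ≤ N) (v : ℤ → ℝ × ℝ)
    (hv : ∀ ℓ : ℤ, v (ℓ + (N:ℤ)) = v ℓ) :
    dE (EQNL N K ε φ) (yLin ε F) v = dE (Ea N ε φ) (yLin ε F) v := by
  rw [dE_EQNL hε hφ hF v, dE_Ea hε hφ hF v]
  set c1 : ℝ := deriv φ F
  set c2 : ℝ := deriv φ (2 * F)
  set z : ℤ → ℝ := fun ℓ => (bd ε v ℓ).1 with hz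
  have hzper : ∀ ℓ : ℤ, z (ℓ + (N:ℤ)) = z ℓ := fun ℓ => by
    simp only [hz]; rw [bd_periodic hv]
  have hKN : (K:ℤ) + 2 ≤ (N:ℤ) := by exact_mod_cast hK2
  have hK1' : (1:ℤ) ≤ (K:ℤ) := by exact_mod_cast hK1
  -- identity on the second-neighbour sums
  have key : ∑ ℓ ∈ Finset.Icc (1:ℤ) (N:ℤ), (z (ℓ+1) + z ℓ)
      = (∑ ℓ ∈ Finset.Icc (1:ℤ) (K:ℤ), (z (ℓ+1) + z ℓ))
        + (2 * ∑ ℓ ∈ Finset.Icc ((K:ℤ)+2) (N:ℤ), z ℓ) + z 1 + z ((K:ℤ)+1) := by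
    have hsplit : ∑ ℓ ∈ Finset.Icc (1:ℤ) (N:ℤ), (z (ℓ+1) + z ℓ)
        = (∑ ℓ ∈ Finset.Icc (1:ℤ) (K:ℤ), (z (ℓ+1) + z ℓ))
          + ∑ ℓ ∈ Finset.Icc ((K:ℤ)+1) (N:ℤ), (z (ℓ+1) + z ℓ) :=
      sum_Icc_split _ (by omega) (by omega)
    have hsum2 : ∑ ℓ ∈ Finset.Icc ((K:ℤ)+1) (N:ℤ), (z (ℓ+1) + z ℓ)
        = 2 * (∑ ℓ ∈ Finset.Icc ((K:ℤ)+2) (N:ℤ), z ℓ) + z 1 + z ((K:ℤ)+1) := by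
      rw [Finset.sum_add_distrib, sum_shift z ((K:ℤ)+1) (N:ℤ)]
      have e1 : ∑ ℓ ∈ Finset.Icc ((K:ℤ)+1+1) ((N:ℤ)+1), z ℓ
          = (∑ ℓ ∈ Finset.Icc ((K:ℤ)+2) (N:ℤ), z ℓ) + z ((N:ℤ)+1) := by
        have := sum_Icc_split z (a := (K:ℤ)+1+1) (m := (N:ℤ)) (b := (N:ℤ)+1)
          (by omega) (by omega)
        rw [show (K:ℤ)+1+1 = (K:ℤ)+2 by ring] at this
        rw [show (K:ℤ)+1+1 = (K:ℤ)+2 by ring, this, Finset.Icc_self, Finset.sum_singleton]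
      have e2 : ∑ ℓ ∈ Finset.Icc ((K:ℤ)+1) (N:ℤ), z ℓ
          = z ((K:ℤ)+1) + ∑ ℓ ∈ Finset.Icc ((K:ℤ)+2) (N:ℤ), z ℓ := by
        have := sum_Icc_split z (a := (K:ℤ)+1) (m := (K:ℤ)+1) (b := (N:ℤ))
          (by omega) (by omega)
        rw [this, Finset.Icc_self, Finset.sum_singleton]
        ring_nf
      have e3 : z ((N:ℤ)+1) = z 1 := by
        rw [show (N:ℤ)+1 = 1 + (N:ℤ) by ring, hzper]
      rw [e1, e2, e3]
      ring
    rw [hsplit, hsum2]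
    ring
  have expand : ∑ ℓ ∈ Finset.Icc (1:ℤ) (N:ℤ),
        (c1 * z ℓ + c2 * (z (ℓ+1) + z ℓ))
      = c1 * (∑ ℓ ∈ Finset.Icc (1:ℤ) (N:ℤ), z ℓ)
        + c2 * ∑ ℓ ∈ Finset.Icc (1:ℤ) (N:ℤ), (z (ℓ+1) + z ℓ) := by
    rw [Finset.sum_add_distrib, ← Finset.mul_sum, ← Finset.mul_sum]
  have r1 : ∑ ℓ ∈ Finset.Icc (1:ℤ) (K:ℤ), c2 * (z (ℓ+1) + z ℓ)
      = c2 * ∑ ℓ ∈ Finset.Icc (1:ℤ) (K:ℤ), (z (ℓ+1) + z ℓ) := (Finset.mul_sum _ _ _).symm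
  have r2 : ∑ ℓ ∈ Finset.Icc ((K:ℤ)+2) (N:ℤ), c2 * (2 * z ℓ)
      = c2 * (2 * ∑ ℓ ∈ Finset.Icc ((K:ℤ)+2) (N:ℤ), z ℓ) := by
    rw [Finset.mul_sum, Finset.mul_sum]
  have hzz : ∀ x : ℤ, (bd ε v x).1 = z x := fun x => rfl
  simp only [hzz]
  have r0 : ∑ ℓ ∈ Finset.Icc (1:ℤ) (N:ℤ), c1 * z ℓ
      = c1 * ∑ ℓ ∈ Finset.Icc (1:ℤ) (N:ℤ), z ℓ := (Finset.mul_sum _ _ _).symm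
  rw [expand, key, r0, r1, r2]
  ring
lemma key_identity (G : ℤ → ℤ → ℝ) (N K : ℕ) (hK1 : 1 ≤ K) (hK2 : K + 2 ≤ N)
    (hGl : ∀ i j : ℤ, G (i + (N:ℤ)) j = G i j) (hGr : ∀ i j : ℤ, G i (j + (N:ℤ)) = G i j) :
    (∑ ℓ ∈ Finset.Icc (1:ℤ) (K:ℤ), (G (ℓ+1) (ℓ+1) + G (ℓ+1) ℓ + G ℓ (ℓ+1) + G ℓ ℓ))
      + (∑ ℓ ∈ Finset.Icc ((K:ℤ)+2) (N:ℤ), 4 * G ℓ ℓ)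
      + 2 * G 1 1 + 2 * G ((K:ℤ)+1) ((K:ℤ)+1)
      - ∑ ℓ ∈ Finset.Icc (1:ℤ) (N:ℤ), (G (ℓ+1) (ℓ+1) + G (ℓ+1) ℓ + G ℓ (ℓ+1) + G ℓ ℓ)
    = (G 1 1 - G 0 1) - (G ((K:ℤ)+2) ((K:ℤ)+1) - G ((K:ℤ)+1) ((K:ℤ)+1))
      - ((∑ ℓ ∈ Finset.Icc ((K:ℤ)+2) (N:ℤ), G (ℓ+1) ℓ)
          - 2 * (∑ ℓ ∈ Finset.Icc ((K:ℤ)+2) (N:ℤ), G ℓ ℓ)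
          + ∑ ℓ ∈ Finset.Icc ((K:ℤ)+2) (N:ℤ), G (ℓ-1) ℓ) := by
  have hKN : (K:ℤ) + 2 ≤ (N:ℤ) := by exact_mod_cast hK2
  have hK1' : (1:ℤ) ≤ (K:ℤ) := by exact_mod_cast hK1
  -- split the full sum at K
  have hsplit : ∑ ℓ ∈ Finset.Icc (1:ℤ) (N:ℤ), (G (ℓ+1) (ℓ+1) + G (ℓ+1) ℓ + G ℓ (ℓ+1) + G ℓ ℓ)
      = (∑ ℓ ∈ Finset.Icc (1:ℤ) (K:ℤ), (G (ℓ+1) (ℓ+1) + G (ℓ+1) ℓ + G ℓ (ℓ+1) + G ℓ ℓ))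
        + ∑ ℓ ∈ Finset.Icc ((K:ℤ)+1) (N:ℤ), (G (ℓ+1) (ℓ+1) + G (ℓ+1) ℓ + G ℓ (ℓ+1) + G ℓ ℓ) :=
    sum_Icc_split _ (by omega) (by omega)
  -- expand the tail sum into four pieces
  have hexp : ∑ ℓ ∈ Finset.Icc ((K:ℤ)+1) (N:ℤ), (G (ℓ+1) (ℓ+1) + G (ℓ+1) ℓ + G ℓ (ℓ+1) + G ℓ ℓ)
      = (∑ ℓ ∈ Finset.Icc ((K:ℤ)+1) (N:ℤ), G (ℓ+1) (ℓ+1))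
        + (∑ ℓ ∈ Finset.Icc ((K:ℤ)+1) (N:ℤ), G (ℓ+1) ℓ)
        + (∑ ℓ ∈ Finset.Icc ((K:ℤ)+1) (N:ℤ), G ℓ (ℓ+1))
        + ∑ ℓ ∈ Finset.Icc ((K:ℤ)+1) (N:ℤ), G ℓ ℓ := by
    rw [Finset.sum_add_distrib, Finset.sum_add_distrib, Finset.sum_add_distrib]
  -- S1 : diagonal shifted sum
  have S1 : ∑ ℓ ∈ Finset.Icc ((K:ℤ)+1) (N:ℤ), G (ℓ+1) (ℓ+1)
      = (∑ ℓ ∈ Finset.Icc ((K:ℤ)+2) (N:ℤ), G ℓ ℓ) + G 1 1 := by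
    rw [sum_shift (fun ℓ => G ℓ ℓ) ((K:ℤ)+1) (N:ℤ)]
    rw [show (K:ℤ)+1+1 = (K:ℤ)+2 by ring]
    rw [sum_Icc_split (fun ℓ => G ℓ ℓ) (a := (K:ℤ)+2) (m := (N:ℤ)) (b := (N:ℤ)+1)
      (by omega) (by omega), Finset.Icc_self, Finset.sum_singleton]
    have : G ((N:ℤ)+1) ((N:ℤ)+1) = G 1 1 := by
      rw [show (N:ℤ)+1 = 1 + (N:ℤ) by ring, hGl, hGr]
    rw [this]
  -- S2 : diagonal sum
  have S2 : ∑ ℓ ∈ Finset.Icc ((K:ℤ)+1) (N:ℤ), G ℓ ℓ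
      = G ((K:ℤ)+1) ((K:ℤ)+1) + ∑ ℓ ∈ Finset.Icc ((K:ℤ)+2) (N:ℤ), G ℓ ℓ := by
    rw [sum_Icc_split (fun ℓ => G ℓ ℓ) (a := (K:ℤ)+1) (m := (K:ℤ)+1) (b := (N:ℤ))
      (by omega) (by omega), Finset.Icc_self, Finset.sum_singleton,
      show (K:ℤ)+1+1 = (K:ℤ)+2 by ring]
  -- C1 : first cross sum
  have C1 : ∑ ℓ ∈ Finset.Icc ((K:ℤ)+1) (N:ℤ), G (ℓ+1) ℓ
      = G ((K:ℤ)+2) ((K:ℤ)+1) + ∑ ℓ ∈ Finset.Icc ((K:ℤ)+2) (N:ℤ), G (ℓ+1) ℓ := by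
    rw [sum_Icc_split (fun ℓ => G (ℓ+1) ℓ) (a := (K:ℤ)+1) (m := (K:ℤ)+1) (b := (N:ℤ))
      (by omega) (by omega), Finset.Icc_self, Finset.sum_singleton,
      show (K:ℤ)+1+1 = (K:ℤ)+2 by ring]
  -- C2 : second cross sum
  have C2 : ∑ ℓ ∈ Finset.Icc ((K:ℤ)+2) (N:ℤ), G (ℓ-1) ℓ
      = (∑ ℓ ∈ Finset.Icc ((K:ℤ)+1) (N:ℤ), G ℓ (ℓ+1)) - G 0 1 := by
    have h1 : ∑ ℓ ∈ Finset.Icc ((K:ℤ)+1) ((N:ℤ)-1), G ℓ (ℓ+1)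
        = ∑ ℓ ∈ Finset.Icc ((K:ℤ)+2) (N:ℤ), G (ℓ-1) ℓ := by
      have := sum_shift (fun ℓ => G (ℓ-1) ℓ) ((K:ℤ)+1) ((N:ℤ)-1)
      simp only [add_sub_cancel_right] at this
      rw [show (K:ℤ)+1+1 = (K:ℤ)+2 by ring, show (N:ℤ)-1+1 = (N:ℤ) by ring] at this
      exact this
    have h2 : ∑ ℓ ∈ Finset.Icc ((K:ℤ)+1) (N:ℤ), G ℓ (ℓ+1)
        = (∑ ℓ ∈ Finset.Icc ((K:ℤ)+1) ((N:ℤ)-1), G ℓ (ℓ+1)) + G (N:ℤ) ((N:ℤ)+1) := by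
      rw [sum_Icc_split (fun ℓ => G ℓ (ℓ+1)) (a := (K:ℤ)+1) (m := (N:ℤ)-1) (b := (N:ℤ))
        (by omega) (by omega), show (N:ℤ)-1+1 = (N:ℤ) by ring, Finset.Icc_self,
        Finset.sum_singleton]
    have h3 : G (N:ℤ) ((N:ℤ)+1) = G 0 1 := by
      rw [show (N:ℤ) = 0 + (N:ℤ) by ring]
      rw [show 0 + (N:ℤ) + 1 = 1 + (N:ℤ) by ring, hGl, hGr]
    rw [← h1]
    rw [h2, h3]
    ring
  have r4 : ∑ ℓ ∈ Finset.Icc ((K:ℤ)+2) (N:ℤ), 4 * G ℓ ℓ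
      = 4 * ∑ ℓ ∈ Finset.Icc ((K:ℤ)+2) (N:ℤ), G ℓ ℓ := (Finset.mul_sum _ _ _).symm
  rw [hsplit, hexp, S1, S2, C1, C2, r4]
  ring
lemma Q2_add_add (φ : ℝ → ℝ) (c : ℝ) (x y z w : ℝ × ℝ) :
    Q2 φ c (x + y) (z + w) = Q2 φ c x z + Q2 φ c x w + Q2 φ c y z + Q2 φ c y w := by
  simp only [Q2, Prod.fst_add, Prod.snd_add]
  ring

lemma Q2_two_smul (φ : ℝ → ℝ) (c : ℝ) (x z : ℝ × ℝ) :
    Q2 φ c ((2:ℝ) • x) ((2:ℝ) • z) = 4 * Q2 φ c x z := by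
  simp only [Q2, Prod.smul_fst, Prod.smul_snd, smul_eq_mul]
  ring

lemma Q2_inv_smul_left {ε : ℝ} (hε : ε ≠ 0) (φ : ℝ → ℝ) (c : ℝ) (x y z : ℝ × ℝ) :
    ε * Q2 φ c (ε⁻¹ • (x - y)) z = Q2 φ c x z - Q2 φ c y z := by
  have hee : ε * ε⁻¹ = 1 := mul_inv_cancel₀ hε
  simp only [Q2, Prod.smul_fst, Prod.smul_snd, Prod.fst_sub, Prod.snd_sub, smul_eq_mul]
  linear_combination (deriv (deriv φ) c * ((x.1 - y.1) * z.1)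
    + deriv φ c / c * ((x.2 - y.2) * z.2)) * hee

lemma Q2_dd {ε : ℝ} (hε : ε ≠ 0) (φ : ℝ → ℝ) (c : ℝ) (x y z w : ℝ × ℝ) :
    ε^2 * Q2 φ c (ε⁻¹ • (ε⁻¹ • (x - y) - ε⁻¹ • (y - z))) w
      = Q2 φ c x w - 2 * Q2 φ c y w + Q2 φ c z w := by
  have hee : ε * ε⁻¹ = 1 := mul_inv_cancel₀ hε
  simp only [Q2, Prod.smul_fst, Prod.smul_snd, Prod.fst_sub, Prod.snd_sub, smul_eq_mul]
  linear_combination ((deriv (deriv φ) c * ((x.1 - 2*y.1 + z.1) * w.1)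
    + deriv φ c / c * ((x.2 - 2*y.2 + z.2) * w.2)) * (ε * ε⁻¹ + 1)) * hee

lemma d2E_diff {N K : ℕ} {ε : ℝ} (hε : ε ≠ 0) {φ : ℝ → ℝ}
    (hφ : ContDiffOn ℝ 2 φ (Set.Ioi 0)) {F : ℝ} (hF : 0 < F)
    (hK1 : 1 ≤ K) (hK2 : K + 2 ≤ N) (u v : ℤ → ℝ × ℝ)
    (hu : ∀ ℓ : ℤ, u (ℓ + (N:ℤ)) = u ℓ) (hv : ∀ ℓ : ℤ, v (ℓ + (N:ℤ)) = v ℓ) :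
    d2E (EQNL N K ε φ) (yLin ε F) u v - d2E (Ea N ε φ) (yLin ε F) u v
      = ε^2 * Q2 φ (2*F) (bd ε (bd ε u) 1) (bd ε v 1)
        - ε^2 * Q2 φ (2*F) (bd ε (bd ε u) ((K:ℤ)+2)) (bd ε v ((K:ℤ)+1))
        - ε^3 * ∑ ℓ ∈ Finset.Icc ((K:ℤ)+2) (N:ℤ),
            Q2 φ (2*F) (bd ε (bd ε (bd ε u)) (ℓ+1)) (bd ε v ℓ) := by
  rw [d2E_EQNL hε hφ hF u v, d2E_Ea hε hφ hF u v]
  have hGl : ∀ i j : ℤ, Q2 φ (2*F) (bd ε u (i + (N:ℤ))) (bd ε v j)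
      = Q2 φ (2*F) (bd ε u i) (bd ε v j) := fun i j => by rw [bd_periodic hu]
  have hGr : ∀ i j : ℤ, Q2 φ (2*F) (bd ε u i) (bd ε v (j + (N:ℤ)))
      = Q2 φ (2*F) (bd ε u i) (bd ε v j) := fun i j => by rw [bd_periodic hv]
  have KI := key_identity (fun i j => Q2 φ (2*F) (bd ε u i) (bd ε v j)) N K hK1 hK2
    hGl hGr
  -- rewrite sums into G-form
  have eS : ∀ a b : ℤ, ∑ ℓ ∈ Finset.Icc a b,
        Q2 φ (2*F) (bd ε u (ℓ+1) + bd ε u ℓ) (bd ε v (ℓ+1) + bd ε v ℓ)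
      = ∑ ℓ ∈ Finset.Icc a b,
          (Q2 φ (2*F) (bd ε u (ℓ+1)) (bd ε v (ℓ+1)) + Q2 φ (2*F) (bd ε u (ℓ+1)) (bd ε v ℓ)
            + Q2 φ (2*F) (bd ε u ℓ) (bd ε v (ℓ+1)) + Q2 φ (2*F) (bd ε u ℓ) (bd ε v ℓ)) :=
    fun a b => Finset.sum_congr rfl (fun ℓ _ => Q2_add_add φ (2*F) _ _ _ _)
  have e4 : ∑ ℓ ∈ Finset.Icc ((K:ℤ)+2) (N:ℤ),
        Q2 φ (2*F) ((2:ℝ) • bd ε u ℓ) ((2:ℝ) • bd ε v ℓ)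
      = ∑ ℓ ∈ Finset.Icc ((K:ℤ)+2) (N:ℤ), 4 * Q2 φ (2*F) (bd ε u ℓ) (bd ε v ℓ) :=
    Finset.sum_congr rfl (fun ℓ _ => Q2_two_smul φ (2*F) _ _)
  -- boundary relations
  have rel1 : ε * Q2 φ (2*F) (bd ε (bd ε u) 1) (bd ε v 1)
      = Q2 φ (2*F) (bd ε u 1) (bd ε v 1) - Q2 φ (2*F) (bd ε u 0) (bd ε v 1) := by
    have h : bd ε (bd ε u) 1 = ε⁻¹ • (bd ε u 1 - bd ε u 0) := by
      simp only [bd]; norm_num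
    rw [h, Q2_inv_smul_left hε]
  have rel2 : ε * Q2 φ (2*F) (bd ε (bd ε u) ((K:ℤ)+2)) (bd ε v ((K:ℤ)+1))
      = Q2 φ (2*F) (bd ε u ((K:ℤ)+2)) (bd ε v ((K:ℤ)+1))
        - Q2 φ (2*F) (bd ε u ((K:ℤ)+1)) (bd ε v ((K:ℤ)+1)) := by
    have h : bd ε (bd ε u) ((K:ℤ)+2) = ε⁻¹ • (bd ε u ((K:ℤ)+2) - bd ε u ((K:ℤ)+1)) := by
      simp only [bd, show (K:ℤ)+2-1 = (K:ℤ)+1 by ring]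
    rw [h, Q2_inv_smul_left hε]
  have rel3 : ε^2 * ∑ ℓ ∈ Finset.Icc ((K:ℤ)+2) (N:ℤ),
        Q2 φ (2*F) (bd ε (bd ε (bd ε u)) (ℓ+1)) (bd ε v ℓ)
      = (∑ ℓ ∈ Finset.Icc ((K:ℤ)+2) (N:ℤ), Q2 φ (2*F) (bd ε u (ℓ+1)) (bd ε v ℓ))
        - 2 * (∑ ℓ ∈ Finset.Icc ((K:ℤ)+2) (N:ℤ), Q2 φ (2*F) (bd ε u ℓ) (bd ε v ℓ))
        + ∑ ℓ ∈ Finset.Icc ((K:ℤ)+2) (N:ℤ), Q2 φ (2*F) (bd ε u (ℓ-1)) (bd ε v ℓ) := by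
    have hpt : ∀ ℓ : ℤ, ε^2 * Q2 φ (2*F) (bd ε (bd ε (bd ε u)) (ℓ+1)) (bd ε v ℓ)
        = Q2 φ (2*F) (bd ε u (ℓ+1)) (bd ε v ℓ) - 2 * Q2 φ (2*F) (bd ε u ℓ) (bd ε v ℓ)
          + Q2 φ (2*F) (bd ε u (ℓ-1)) (bd ε v ℓ) := by
      intro ℓ
      have h : bd ε (bd ε (bd ε u)) (ℓ+1)
          = ε⁻¹ • (ε⁻¹ • (bd ε u (ℓ+1) - bd ε u ℓ) - ε⁻¹ • (bd ε u ℓ - bd ε u (ℓ-1))) := by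
        simp only [bd, add_sub_cancel_right]
      rw [h, Q2_dd hε]
    rw [Finset.mul_sum]
    rw [Finset.sum_congr rfl (fun ℓ _ => hpt ℓ)]
    rw [Finset.sum_add_distrib, Finset.sum_sub_distrib, ← Finset.mul_sum]
  have eEa : ∑ ℓ ∈ Finset.Icc (1:ℤ) (N:ℤ),
        (Q2 φ F (bd ε u ℓ) (bd ε v ℓ)
          + Q2 φ (2*F) (bd ε u (ℓ+1) + bd ε u ℓ) (bd ε v (ℓ+1) + bd ε v ℓ))
      = (∑ ℓ ∈ Finset.Icc (1:ℤ) (N:ℤ), Q2 φ F (bd ε u ℓ) (bd ε v ℓ))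
        + ∑ ℓ ∈ Finset.Icc (1:ℤ) (N:ℤ),
          (Q2 φ (2*F) (bd ε u (ℓ+1)) (bd ε v (ℓ+1)) + Q2 φ (2*F) (bd ε u (ℓ+1)) (bd ε v ℓ)
            + Q2 φ (2*F) (bd ε u ℓ) (bd ε v (ℓ+1)) + Q2 φ (2*F) (bd ε u ℓ) (bd ε v ℓ)) := by
    rw [Finset.sum_add_distrib, eS]
  rw [eS, e4, eEa, Q2_two_smul, Q2_two_smul]
  linear_combination ε * KI - ε * rel1 + ε * rel2 + ε * rel3
lemma enorm2_nonneg (x : ℝ × ℝ) : 0 ≤ enorm2 x := Real.sqrt_nonneg _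

lemma enorm2_sq (x : ℝ × ℝ) : (enorm2 x) ^ 2 = x.1 ^ 2 + x.2 ^ 2 :=
  Real.sq_sqrt (by positivity)

lemma abs_prod_le (p q : ℝ × ℝ) : |p.1| * |q.1| + |p.2| * |q.2| ≤ enorm2 p * enorm2 q := by
  have ha := enorm2_sq p
  have hb := enorm2_sq q
  have ha0 := enorm2_nonneg p
  have hb0 := enorm2_nonneg q
  nlinarith [sq_nonneg (|p.1| * |q.2| - |p.2| * |q.1|), sq_abs p.1, sq_abs p.2, sq_abs q.1,
    sq_abs q.2, mul_nonneg ha0 hb0, mul_nonneg (abs_nonneg p.1) (abs_nonneg q.1),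
    mul_nonneg (abs_nonneg p.2) (abs_nonneg q.2),
    mul_nonneg (mul_nonneg (abs_nonneg p.1) (abs_nonneg q.1))
      (mul_nonneg (abs_nonneg p.2) (abs_nonneg q.2))]

lemma Q2_abs_bound (φ : ℝ → ℝ) (c : ℝ) (p q : ℝ × ℝ) :
    |Q2 φ c p q| ≤ max |deriv (deriv φ) c| |deriv φ c / c| * (enorm2 p * enorm2 q) := by
  set M := max |deriv (deriv φ) c| |deriv φ c / c| with hM
  have hM0 : 0 ≤ M := le_trans (abs_nonneg _) (le_max_left _ _)
  have h1 : |Q2 φ c p q| ≤ |deriv (deriv φ) c| * (|p.1| * |q.1|)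
      + |deriv φ c / c| * (|p.2| * |q.2|) := by
    rw [Q2]
    refine le_trans (abs_add_le _ _) (le_of_eq ?_)
    rw [abs_mul, abs_mul, abs_mul, abs_mul]
  have h2 : |deriv (deriv φ) c| * (|p.1| * |q.1|) + |deriv φ c / c| * (|p.2| * |q.2|)
      ≤ M * (|p.1| * |q.1|) + M * (|p.2| * |q.2|) :=
    add_le_add (mul_le_mul_of_nonneg_right (le_max_left _ _) (by positivity))
      (mul_le_mul_of_nonneg_right (le_max_right _ _) (by positivity))
  have h3 : M * (|p.1| * |q.1|) + M * (|p.2| * |q.2|)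
      = M * (|p.1| * |q.1| + |p.2| * |q.2|) := by ring
  have h4 : M * (|p.1| * |q.1| + |p.2| * |q.2|) ≤ M * (enorm2 p * enorm2 q) :=
    mul_le_mul_of_nonneg_left (abs_prod_le p q) hM0
  linarith

lemma le_sqrt_mul_sqrt {X S T : ℝ} (hX : 0 ≤ X) (hS : 0 ≤ S) (hT : 0 ≤ T) (h : X ^ 2 ≤ S * T) :
    X ≤ Real.sqrt S * Real.sqrt T := by
  have h1 : Real.sqrt S ^ 2 = S := Real.sq_sqrt hS
  have h2 : Real.sqrt T ^ 2 = T := Real.sq_sqrt hT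
  nlinarith [Real.sqrt_nonneg S, Real.sqrt_nonneg T,
    mul_nonneg (Real.sqrt_nonneg S) (Real.sqrt_nonneg T)]
set_option maxHeartbeats 1000000 in
theorem stmt_18 (N : ℕ) (hN : 4 ≤ N) (ε : ℝ) (hε : ε = (N : ℝ)⁻¹)
    (φ : ℝ → ℝ) (hφ : ContDiffOn ℝ 2 φ (Set.Ioi 0)) (F : ℝ) (hF : 0 < F)
    (K : ℕ) (hK1 : 1 < K) (hK2 : K + 2 < N)
    (f ua : ℤ → ℝ × ℝ) (hf : IsDisp N f) (hua : IsDisp N ua)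
    (heq : ∀ v : ℤ → ℝ × ℝ, IsDisp N v →
      dE (Ea N ε φ) (yLin ε F) v + d2E (Ea N ε φ) (yLin ε F) ua v = ip N ε f v) :
    ∀ v : ℤ → ℝ × ℝ, IsDisp N v →
      |dE (EQNL N K ε φ) (yLin ε F) v + d2E (EQNL N K ε φ) (yLin ε F) ua v - ip N ε f v| ≤
        ε * max |deriv (deriv φ) (2 * F)| |deriv φ (2 * F) / (2 * F)| *
          (Real.sqrt (ε * (enorm2 (bd ε (bd ε ua) 1)) ^ 2
              + ε * (enorm2 (bd ε (bd ε ua) ((K : ℤ) + 2))) ^ 2)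
            + ε * Real.sqrt (ε * ∑ ℓ ∈ Finset.Icc ((K : ℤ) + 2) (N : ℤ),
                (enorm2 (bd ε (bd ε (bd ε ua)) (ℓ + 1))) ^ 2)) *
          nrm N ε (bd ε v) := by
  intro v hv
  have hNpos : (0:ℝ) < (N:ℝ) := by
    have : 0 < N := by omega
    exact_mod_cast this
  have hεpos : 0 < ε := by rw [hε]; positivity
  have hεne : ε ≠ 0 := hεpos.ne'
  have hK1' : 1 ≤ K := hK1.le
  have hK2' : K + 2 ≤ N := hK2.le
  rw [← heq v hv]
  have h1 := dE_diff hεne hφ hF hK1' hK2' v hv.1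
  have h2 := d2E_diff hεne hφ hF hK1' hK2' ua v hua.1 hv.1
  have hexp : dE (EQNL N K ε φ) (yLin ε F) v + d2E (EQNL N K ε φ) (yLin ε F) ua v
      - (dE (Ea N ε φ) (yLin ε F) v + d2E (Ea N ε φ) (yLin ε F) ua v)
      = ε^2 * Q2 φ (2*F) (bd ε (bd ε ua) 1) (bd ε v 1)
        - ε^2 * Q2 φ (2*F) (bd ε (bd ε ua) ((K:ℤ)+2)) (bd ε v ((K:ℤ)+1))
        - ε^3 * ∑ ℓ ∈ Finset.Icc ((K:ℤ)+2) (N:ℤ),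
            Q2 φ (2*F) (bd ε (bd ε (bd ε ua)) (ℓ+1)) (bd ε v ℓ) := by
    rw [h1]
    linarith [h2]
  rw [hexp]
  set M := max |deriv (deriv φ) (2 * F)| |deriv φ (2 * F) / (2 * F)| with hM
  have hM0 : 0 ≤ M := le_trans (abs_nonneg _) (le_max_left _ _)
  set a1 := enorm2 (bd ε (bd ε ua) 1) with ha1
  set a2 := enorm2 (bd ε (bd ε ua) ((K:ℤ)+2)) with ha2
  set b1 := enorm2 (bd ε v 1) with hb1
  set b2 := enorm2 (bd ε v ((K:ℤ)+1)) with hb2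
  set S := ∑ ℓ ∈ Finset.Icc ((K:ℤ)+2) (N:ℤ),
      (enorm2 (bd ε (bd ε (bd ε ua)) (ℓ+1)))^2 with hS
  set T := ∑ ℓ ∈ Finset.Icc (1:ℤ) (N:ℤ), (enorm2 (bd ε v ℓ))^2 with hT
  set SP := ∑ ℓ ∈ Finset.Icc ((K:ℤ)+2) (N:ℤ),
      enorm2 (bd ε (bd ε (bd ε ua)) (ℓ+1)) * enorm2 (bd ε v ℓ) with hSP
  have ha10 : 0 ≤ a1 := enorm2_nonneg _
  have ha20 : 0 ≤ a2 := enorm2_nonneg _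
  have hb10 : 0 ≤ b1 := enorm2_nonneg _
  have hb20 : 0 ≤ b2 := enorm2_nonneg _
  have hS0 : 0 ≤ S := Finset.sum_nonneg (fun ℓ _ => sq_nonneg _)
  have hT0 : 0 ≤ T := Finset.sum_nonneg (fun ℓ _ => sq_nonneg _)
  have hSP0 : 0 ≤ SP := Finset.sum_nonneg (fun ℓ _ =>
    mul_nonneg (enorm2_nonneg _) (enorm2_nonneg _))
  -- term-by-term bounds
  have t1 : |ε^2 * Q2 φ (2*F) (bd ε (bd ε ua) 1) (bd ε v 1)| ≤ ε^2 * (M * (a1 * b1)) := by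
    rw [abs_mul, abs_of_nonneg (by positivity : (0:ℝ) ≤ ε^2)]
    exact mul_le_mul_of_nonneg_left (Q2_abs_bound φ (2*F) _ _) (by positivity)
  have t2 : |ε^2 * Q2 φ (2*F) (bd ε (bd ε ua) ((K:ℤ)+2)) (bd ε v ((K:ℤ)+1))|
      ≤ ε^2 * (M * (a2 * b2)) := by
    rw [abs_mul, abs_of_nonneg (by positivity : (0:ℝ) ≤ ε^2)]
    exact mul_le_mul_of_nonneg_left (Q2_abs_bound φ (2*F) _ _) (by positivity)
  have t3 : |ε^3 * ∑ ℓ ∈ Finset.Icc ((K:ℤ)+2) (N:ℤ),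
        Q2 φ (2*F) (bd ε (bd ε (bd ε ua)) (ℓ+1)) (bd ε v ℓ)| ≤ ε^3 * (M * SP) := by
    rw [abs_mul, abs_of_nonneg (by positivity : (0:ℝ) ≤ ε^3)]
    refine mul_le_mul_of_nonneg_left ?_ (by positivity)
    refine le_trans (Finset.abs_sum_le_sum_abs _ _) ?_
    rw [hSP, Finset.mul_sum]
    exact Finset.sum_le_sum (fun ℓ _ => Q2_abs_bound φ (2*F) _ _)
  have habs3 : |ε^2 * Q2 φ (2*F) (bd ε (bd ε ua) 1) (bd ε v 1)
      - ε^2 * Q2 φ (2*F) (bd ε (bd ε ua) ((K:ℤ)+2)) (bd ε v ((K:ℤ)+1))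
      - ε^3 * ∑ ℓ ∈ Finset.Icc ((K:ℤ)+2) (N:ℤ),
          Q2 φ (2*F) (bd ε (bd ε (bd ε ua)) (ℓ+1)) (bd ε v ℓ)|
      ≤ ε^2 * (M * (a1*b1)) + ε^2 * (M * (a2*b2)) + ε^3 * (M * SP) := by
    have h3 := abs_add_three
      (ε^2 * Q2 φ (2*F) (bd ε (bd ε ua) 1) (bd ε v 1))
      (-(ε^2 * Q2 φ (2*F) (bd ε (bd ε ua) ((K:ℤ)+2)) (bd ε v ((K:ℤ)+1))))
      (-(ε^3 * ∑ ℓ ∈ Finset.Icc ((K:ℤ)+2) (N:ℤ),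
          Q2 φ (2*F) (bd ε (bd ε (bd ε ua)) (ℓ+1)) (bd ε v ℓ)))
    simp only [abs_neg, ← sub_eq_add_neg] at h3
    linarith
  -- Cauchy–Schwarz bounds
  have hbT : b1^2 + b2^2 ≤ T := by
    have hne : (1:ℤ) ≠ (K:ℤ)+1 := by omega
    have hsub : ({1, (K:ℤ)+1} : Finset ℤ) ⊆ Finset.Icc (1:ℤ) (N:ℤ) := by
      intro x hx
      simp only [Finset.mem_insert, Finset.mem_singleton] at hx
      rcases hx with h|h <;> simp only [Finset.mem_Icc] <;> omega
    have hmono := Finset.sum_le_sum_of_subset_of_nonneg hsub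
      (fun i _ _ => sq_nonneg (enorm2 (bd ε v i)))
    rwa [Finset.sum_pair hne] at hmono
  have E1 : a1 * b1 + a2 * b2 ≤ Real.sqrt (a1^2 + a2^2) * Real.sqrt T := by
    apply le_sqrt_mul_sqrt (by positivity) (by positivity) hT0
    have c1 : (a1*b1 + a2*b2)^2 ≤ (a1^2 + a2^2) * (b1^2 + b2^2) := by
      nlinarith [sq_nonneg (a1*b2 - a2*b1)]
    have c2 : (a1^2 + a2^2) * (b1^2 + b2^2) ≤ (a1^2 + a2^2) * T :=
      mul_le_mul_of_nonneg_left hbT (by positivity)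
    linarith
  have hT' : ∑ ℓ ∈ Finset.Icc ((K:ℤ)+2) (N:ℤ), (enorm2 (bd ε v ℓ))^2 ≤ T := by
    apply Finset.sum_le_sum_of_subset_of_nonneg
    · intro x hx
      simp only [Finset.mem_Icc] at hx ⊢
      omega
    · exact fun i _ _ => sq_nonneg _
  have E2 : SP ≤ Real.sqrt S * Real.sqrt T := by
    apply le_sqrt_mul_sqrt hSP0 hS0 hT0
    have hCS := Finset.sum_mul_sq_le_sq_mul_sq (Finset.Icc ((K:ℤ)+2) (N:ℤ))
      (fun ℓ => enorm2 (bd ε (bd ε (bd ε ua)) (ℓ+1))) (fun ℓ => enorm2 (bd ε v ℓ))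
    calc SP^2 ≤ S * ∑ ℓ ∈ Finset.Icc ((K:ℤ)+2) (N:ℤ), (enorm2 (bd ε v ℓ))^2 := hCS
      _ ≤ S * T := mul_le_mul_of_nonneg_left hT' hS0
  -- final assembly
  have hfin : ε^2 * (M * (a1*b1)) + ε^2 * (M * (a2*b2)) + ε^3 * (M * SP)
      ≤ ε^2 * M * (Real.sqrt (a1^2+a2^2) * Real.sqrt T)
        + ε^3 * M * (Real.sqrt S * Real.sqrt T) := by
    have g1 := mul_le_mul_of_nonneg_left E1 (by positivity : (0:ℝ) ≤ ε^2 * M)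
    have g2 := mul_le_mul_of_nonneg_left E2 (by positivity : (0:ℝ) ≤ ε^3 * M)
    linarith [g1, g2]
  have hrhs : ε * M * (Real.sqrt (ε * a1^2 + ε * a2^2) + ε * Real.sqrt (ε * S))
        * nrm N ε (bd ε v)
      = ε^2 * M * (Real.sqrt (a1^2+a2^2) * Real.sqrt T)
        + ε^3 * M * (Real.sqrt S * Real.sqrt T) := by
    have hs1 : Real.sqrt (ε * a1^2 + ε * a2^2)
        = Real.sqrt ε * Real.sqrt (a1^2 + a2^2) := by
      rw [show ε * a1^2 + ε * a2^2 = ε * (a1^2 + a2^2) by ring, Real.sqrt_mul hεpos.le]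
    have hs2 : Real.sqrt (ε * S) = Real.sqrt ε * Real.sqrt S := Real.sqrt_mul hεpos.le S
    have hs3 : nrm N ε (bd ε v) = Real.sqrt ε * Real.sqrt T := by
      rw [nrm, ← hT, Real.sqrt_mul hεpos.le]
    have hss : Real.sqrt ε * Real.sqrt ε = ε := Real.mul_self_sqrt hεpos.le
    rw [hs1, hs2, hs3]
    linear_combination (ε * M * Real.sqrt (a1^2+a2^2) * Real.sqrt T
      + ε^2 * M * Real.sqrt S * Real.sqrt T) * hss
  rw [hrhs]
  exact le_trans habs3 hfin
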